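/- Let A = ℂ[u^{±1},v^{±1}]⋊Γ, let [A,A] denote the ℂ-linear span of the commutators {xy − yx : x, y ∈ A}, and let A^Γ denote the ℂ-span of the monomials {u^a v^b : a, b ∈ ℤ, a ≡ b mod d} (the Γ-invariant Laurent polynomials). Then A = A^Γ ⊕ [A,A] as ℂ-vector spaces; in particular the zeroth cyclic homology HC₀(A) = A/[A,A] is linearly isomorphic to A^Γ. -/

import Mathlib

/-!
STATEMENT 13: Let `A = ℂ[u^{±1}, v^{±1}] ⋊ Γ`, let `[A,A]` be the ℂ-span of the
commutators `{xy − yx : x, y ∈ A}`, and let `A^Γ` be the ℂ-span of the monomials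
`{u^a v^b : a ≡ b mod d}` (the Γ-invariant Laurent polynomials).  Then
`A = A^Γ ⊕ [A,A]` as ℂ-vector spaces.
-/

/-- Data exhibiting `A` as the skew group algebra `ℂ[u^{±1}, v^{±1}] ⋊ (ℤ/dℤ)`,
where `b a b' c` represents the basis element `u^a v^{b'} ξ^c`. -/
structure SkewLaurent2Algebra (d : ℕ) (ζ : ℂ) (A : Type) [Ring A] [Algebra ℂ A] where
  b : ℤ → ℤ → ZMod d → A
  basis : Module.Basis (ℤ × ℤ × ZMod d) ℂ A
  basis_eq : ∀ (a b' : ℤ) (c : ZMod d), basis (a, b', c) = b a b' c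
  b_one : b 0 0 0 = 1
  b_mul : ∀ (a b' : ℤ) (c : ZMod d) (e f : ℤ) (g : ZMod d),
    b a b' c * b e f g = (ζ ^ ((c.val : ℤ) * (e - f))) • b (a + e) (b' + f) (c + g)

theorem stmt_13 (d : ℕ) (hd : 0 < d) (ζ : ℂ) (hζ : IsPrimitiveRoot ζ d)
    (A : Type) [Ring A] [Algebra ℂ A] (S : SkewLaurent2Algebra d ζ A)
    (Inv C : Submodule ℂ A)
    (hInv : Inv = Submodule.span ℂ
        {x : A | ∃ a b' : ℤ, Int.ModEq (d : ℤ) a b' ∧ x = S.b a b' 0})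
    (hC : C = Submodule.span ℂ {x : A | ∃ y z : A, x = y * z - z * y}) :
    (⊤ : Submodule ℂ A) = Inv ⊔ C ∧ Inv ⊓ C = ⊥ := by
  haveI : NeZero d := ⟨hd.ne'⟩
  set B := S.basis with hB
  -- the "invariant" index set
  set P : ℤ × ℤ × ZMod d → Prop := fun p => p.2.2 = 0 ∧ (d : ℤ) ∣ p.1 - p.2.1 with hP
  set W : Submodule ℂ A := Submodule.span ℂ (B '' {p | ¬ P p}) with hW
  -- basic commutator formula
  have hζ0 : ζ ≠ 0 := hζ.ne_zero hd.ne'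
  have hcomm : ∀ (a b' : ℤ) (c : ZMod d) (e f : ℤ) (g : ZMod d),
      S.b a b' c * S.b e f g - S.b e f g * S.b a b' c =
      (ζ ^ ((c.val : ℤ) * (e - f)) - ζ ^ ((g.val : ℤ) * (a - b'))) •
        S.b (a + e) (b' + f) (c + g) := by
    intro a b' c e f g
    rw [S.b_mul, S.b_mul, show e + a = a + e from add_comm _ _,
      show f + b' = b' + f from add_comm _ _, show g + c = c + g from add_comm _ _, sub_smul]
  -- every commutator lies in C
  have hCmem : ∀ x y : A, x * y - y * x ∈ C := by
    intro x y
    rw [hC]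
    exact Submodule.subset_span ⟨x, y, rfl⟩
  -- C ⊆ W : commutators of basis elements lie in W
  have key : ∀ p q : ℤ × ℤ × ZMod d, B p * B q - B q * B p ∈ W := by
    rintro ⟨a, b', c⟩ ⟨e, f, g⟩
    rw [hB, S.basis_eq, S.basis_eq, hcomm]
    by_cases hp : P (a + e, b' + f, c + g)
    · -- the scalar vanishes
      obtain ⟨hcg, hdvd⟩ := hp
      simp only at hcg hdvd
      have hscal : ζ ^ ((c.val : ℤ) * (e - f)) - ζ ^ ((g.val : ℤ) * (a - b')) = 0 := by
        rw [sub_eq_zero]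
        have h1 : ζ ^ ((c.val : ℤ) * (e - f) - (g.val : ℤ) * (a - b')) = 1 := by
          rw [hζ.zpow_eq_one_iff_dvd]
          rw [← ZMod.intCast_zmod_eq_zero_iff_dvd]
          have hc' : (c.val : ZMod d) + (g.val : ZMod d) = 0 := by
            rw [ZMod.natCast_val, ZMod.natCast_val, ZMod.cast_id, ZMod.cast_id]
            exact hcg
          have h2' : ((a : ZMod d) + e) - ((b' : ZMod d) + f) = 0 := by
            have := (ZMod.intCast_zmod_eq_zero_iff_dvd ((a + e) - (b' + f)) d).mpr hdvd
            push_cast at this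
            linear_combination this
          push_cast
          linear_combination ((e : ZMod d) - f) * hc' - (g.val : ZMod d) * h2'
        rw [zpow_sub₀ hζ0, div_eq_one_iff_eq (zpow_ne_zero _ hζ0)] at h1
        exact h1
      rw [hscal, zero_smul]
      exact W.zero_mem
    · exact W.smul_mem _ (Submodule.subset_span
        ⟨(a + e, b' + f, c + g), hp, by rw [hB]; exact S.basis_eq _ _ _⟩)
  have hCW : C ≤ W := by
    rw [hC, Submodule.span_le]
    rintro _ ⟨y, z, rfl⟩
    -- reduce to basis elements by linearity
    have hspan : ∀ x : A, x ∈ Submodule.span ℂ (Set.range B) := fun x => by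
      rw [B.span_eq]; exact Submodule.mem_top
    have step1 : ∀ z : A, (∀ p, B p * z - z * B p ∈ W) → ∀ y : A, y * z - z * y ∈ W := by
      intro z h y
      have hle : Submodule.span ℂ (Set.range B) ≤
          W.comap (LinearMap.mulRight ℂ z - LinearMap.mulLeft ℂ z) := by
        rw [Submodule.span_le]
        rintro _ ⟨p, rfl⟩
        simpa using h p
      simpa using hle (hspan y)
    have step0 : ∀ p, ∀ z : A, B p * z - z * B p ∈ W := by
      intro p z
      have hle : Submodule.span ℂ (Set.range B) ≤
          W.comap (LinearMap.mulLeft ℂ (B p) - LinearMap.mulRight ℂ (B p)) := by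
        rw [Submodule.span_le]
        rintro _ ⟨q, rfl⟩
        simpa using key p q
      simpa using hle (hspan z)
    exact step1 z (fun p => step0 p z) y
  -- W ⊆ C
  have hWC : W ≤ C := by
    rw [hW, Submodule.span_le]
    rintro _ ⟨⟨a, b', c⟩, hp, rfl⟩
    rw [hB, S.basis_eq]
    simp only [hP, Set.mem_setOf_eq, not_and] at hp
    by_cases hc : c = 0
    · -- case c = 0, then d ∤ a - b'
      have hnd : ¬ (d : ℤ) ∣ a - b' := hp hc
      subst hc
      have h := hcomm a b' 1 0 0 (-1)
      simp only [add_zero, sub_zero, mul_zero, sub_self, add_neg_cancel, zpow_zero] at h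
      set k : ℤ := (((-1 : ZMod d)).val : ℤ) with hk
      have hs : (1 : ℂ) - ζ ^ (k * (a - b')) ≠ 0 := by
        intro hcon
        have h1 : ζ ^ (k * (a - b')) = 1 := by linear_combination -hcon
        rw [hζ.zpow_eq_one_iff_dvd] at h1
        have hk1 : (d : ℤ) ∣ k + 1 := by
          rw [← ZMod.intCast_zmod_eq_zero_iff_dvd]
          push_cast
          rw [hk]
          push_cast
          rw [ZMod.natCast_val, ZMod.cast_id]
          ring
        have : (d : ℤ) ∣ (k + 1) * (a - b') := hk1.mul_right _
        have : (d : ℤ) ∣ (a - b') := by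
          have h2 : (d : ℤ) ∣ (k + 1) * (a - b') - k * (a - b') := this.sub h1
          have h3 : (k + 1) * (a - b') - k * (a - b') = a - b' := by ring
          rwa [h3] at h2
        exact hnd this
      have hmem : (1 - ζ ^ (k * (a - b'))) • S.b a b' 0 ∈ C := by
        rw [← h]; exact hCmem _ _
      have : S.b a b' 0 = (1 - ζ ^ (k * (a - b')))⁻¹ • ((1 - ζ ^ (k * (a - b'))) • S.b a b' 0) := by
        rw [smul_smul, inv_mul_cancel₀ hs, one_smul]
      rw [this]
      exact C.smul_mem _ hmem
    · -- case c ≠ 0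
      have h := hcomm (a - 1) b' c 1 0 0
      simp only [sub_add_cancel, add_zero, sub_zero, mul_one, ZMod.val_zero, Int.natCast_zero,
        zero_mul, zpow_zero, mul_zero, sub_self] at h
      have hs : ζ ^ ((c.val : ℤ)) - 1 ≠ 0 := by
        intro hcon
        have h1 : ζ ^ ((c.val : ℤ)) = 1 := by linear_combination hcon
        rw [hζ.zpow_eq_one_iff_dvd] at h1
        have : (d : ℕ) ∣ c.val := by exact_mod_cast h1
        have hv : c.val = 0 := Nat.eq_zero_of_dvd_of_lt this (ZMod.val_lt c)
        exact hc ((ZMod.val_eq_zero c).mp hv)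
      have hmem : (ζ ^ ((c.val : ℤ)) - 1) • S.b a b' c ∈ C := by
        rw [← h]; exact hCmem _ _
      have : S.b a b' c = (ζ ^ ((c.val : ℤ)) - 1)⁻¹ • ((ζ ^ ((c.val : ℤ)) - 1) • S.b a b' c) := by
        rw [smul_smul, inv_mul_cancel₀ hs, one_smul]
      rw [this]
      exact C.smul_mem _ hmem
  have hWeq : W = C := le_antisymm hWC hCW
  -- Inv is the span of the basis vectors indexed by P
  have hInvEq : Inv = Submodule.span ℂ (B '' {p | P p}) := by
    rw [hInv]
    congr 1
    ext x
    constructor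
    · rintro ⟨a, b', hmod, rfl⟩
      exact ⟨(a, b', 0), ⟨rfl, Int.ModEq.dvd hmod.symm⟩, by rw [hB]; exact S.basis_eq _ _ _⟩
    · rintro ⟨⟨a, b', c⟩, ⟨hc, hdvd⟩, rfl⟩
      simp only at hc hdvd
      subst hc
      exact ⟨a, b', (Int.modEq_iff_dvd.mpr hdvd).symm, by rw [hB, S.basis_eq]⟩
  constructor
  · rw [hInvEq, ← hWeq, hW, ← Submodule.span_union, ← Set.image_union]
    have : {p : ℤ × ℤ × ZMod d | P p} ∪ {p | ¬ P p} = Set.univ := by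
      ext p; simp [em]
    rw [this, Set.image_univ, B.span_eq]
  · rw [hInvEq, ← hWeq, hW]
    rw [← disjoint_iff]
    exact B.linearIndependent.disjoint_span_image (by
      rw [Set.disjoint_iff]
      rintro p ⟨h1, h2⟩
      exact h2 h1)
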